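/- For every Kripke structure K with initial macro-path ρ0 and every left-positive InqLTL formula φ: ρ0 ⊨_K φ under the macro-path semantics if and only if L(K) ⊨ φ under the InqLTL team semantics, where L(K) is the set of traces induced by the initial paths of K. -/

import Mathlib

/-- A trace over the set `AP` of atomic propositions. -/
abbrev Trace (AP : Type) := ℕ → Set AP

/-- A team: a set of traces. -/
abbrev Team (AP : Type) := Set (Trace AP)

/-- The suffix `w≥i` of a trace. -/
def Trace.shift {AP : Type} (w : Trace AP) (i : ℕ) : Trace AP := fun j => w (i + j)

/-- The suffix team `L≥i`. -/
def Team.shift {AP : Type} (L : Team AP) (i : ℕ) : Team AP := (fun w => Trace.shift w i) '' L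

/-- InqLTL formulas over `AP`. -/
inductive InqForm (AP : Type) : Type where
  | bot
  | atom (p : AP)
  | or (φ ψ : InqForm AP)
  | and (φ ψ : InqForm AP)
  | imp (φ ψ : InqForm AP)
  | next (φ : InqForm AP)
  | untl (φ ψ : InqForm AP)
  | rel (φ ψ : InqForm AP)

/-- Team satisfaction for InqLTL. -/
def InqForm.sat {AP : Type} : InqForm AP → Team AP → Prop
  | .bot, L => L = ∅
  | .atom p, L => ∀ w ∈ L, p ∈ w 0
  | .or φ ψ, L => φ.sat L ∨ ψ.sat L
  | .and φ ψ, L => φ.sat L ∧ ψ.sat L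
  | .imp φ ψ, L => ∀ L' ⊆ L, φ.sat L' → ψ.sat L'
  | .next φ, L => φ.sat (L.shift 1)
  | .untl φ ψ, L => ∃ i, ψ.sat (L.shift i) ∧ ∀ k < i, φ.sat (L.shift k)
  | .rel φ ψ, L => ∀ i, ψ.sat (L.shift i) ∨ ∃ k < i, φ.sat (L.shift k)

/-- Positive InqLTL formulas: `φ ::= ⊥ | p | ¬p | φ ⊕ φ | φ ∧ φ | X φ | φ U φ | φ R φ`,
where `¬p` abbreviates `p → ⊥`. -/
def InqForm.isPositive {AP : Type} : InqForm AP → Prop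
  | .bot => True
  | .atom _ => True
  | .imp (.atom _) .bot => True
  | .imp _ _ => False
  | .or φ ψ => φ.isPositive ∧ ψ.isPositive
  | .and φ ψ => φ.isPositive ∧ ψ.isPositive
  | .next φ => φ.isPositive
  | .untl φ ψ => φ.isPositive ∧ ψ.isPositive
  | .rel φ ψ => φ.isPositive ∧ ψ.isPositive

/-- Left-positive InqLTL formulas:
`φ ::= ⊥ | p | ¬ξ | φ ⊕ φ | φ ∧ φ | ψ → φ | X φ | φ U φ | φ R φ`,
where `ξ` is an arbitrary InqLTL formula, `ψ` is a positive InqLTL formula, and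
`¬ξ` abbreviates `ξ → ⊥`. -/
def InqForm.isLeftPositive {AP : Type} : InqForm AP → Prop
  | .bot => True
  | .atom _ => True
  | .imp ψ φ => φ = .bot ∨ (ψ.isPositive ∧ φ.isLeftPositive)
  | .or φ ψ => φ.isLeftPositive ∧ ψ.isLeftPositive
  | .and φ ψ => φ.isLeftPositive ∧ ψ.isLeftPositive
  | .next φ => φ.isLeftPositive
  | .untl φ ψ => φ.isLeftPositive ∧ ψ.isLeftPositive
  | .rel φ ψ => φ.isLeftPositive ∧ ψ.isLeftPositive

/-- A Kripke structure over `AP` with states `S`: a set of initial states, a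
left-total transition relation, and a labelling of states by propositions. -/
structure Kripke (AP S : Type) where
  init : Set S
  R : S → S → Prop
  leftTotal : ∀ s, ∃ s', R s s'
  lab : S → Set AP

/-- A path of `K`. -/
def Kripke.IsPath {AP S : Type} (K : Kripke AP S) (π : ℕ → S) : Prop :=
  ∀ i, K.R (π i) (π (i + 1))

/-- `T'` is a successor macro-state of `T`. -/
def Kripke.MSucc {AP S : Type} (K : Kripke AP S) (T T' : Set S) : Prop :=
  (∀ s ∈ T, ∃ s' ∈ T', K.R s s') ∧ (∀ s' ∈ T', ∃ s ∈ T, K.R s s')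

/-- A macro-path of `K`: an infinite sequence of macro-states, each a successor
of the previous one. -/
def Kripke.IsMacroPath {AP S : Type} (K : Kripke AP S) (ρ : ℕ → Set S) : Prop :=
  ∀ i, K.MSucc (ρ i) (ρ (i + 1))

/-- `Paths_K(ρ)`: the set of paths of `K` encoded by the macro-path `ρ`. -/
def Kripke.PathsIn {AP S : Type} (K : Kripke AP S) (ρ : ℕ → Set S) : Set (ℕ → S) :=
  {π | K.IsPath π ∧ ∀ i, π i ∈ ρ i}

/-- The suffix `ρ≥i` of a macro-path. -/
def mshift {S : Type} (ρ : ℕ → Set S) (i : ℕ) : ℕ → Set S := fun j => ρ (i + j)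

/-- The macro-path semantics `ρ ⊨_K φ` of InqLTL. -/
def Kripke.msat {AP S : Type} (K : Kripke AP S) : InqForm AP → (ℕ → Set S) → Prop
  | .bot, ρ => K.PathsIn ρ = ∅
  | .atom p, ρ => ∀ s ∈ ρ 0, p ∈ K.lab s
  | .or φ ψ, ρ => K.msat φ ρ ∨ K.msat ψ ρ
  | .and φ ψ, ρ => K.msat φ ρ ∧ K.msat ψ ρ
  | .imp φ ψ, ρ =>
      ∀ ρ', K.IsMacroPath ρ' → (∀ i, ρ' i ⊆ ρ i) → K.msat φ ρ' → K.msat ψ ρ'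
  | .next φ, ρ => K.msat φ (mshift ρ 1)
  | .untl φ ψ, ρ => ∃ i, K.msat ψ (mshift ρ i) ∧ ∀ k < i, K.msat φ (mshift ρ k)
  | .rel φ ψ, ρ => ∀ i, K.msat ψ (mshift ρ i) ∨ ∃ k < i, K.msat φ (mshift ρ k)

/-- The trace induced by a path of `K`. -/
def Kripke.traceOf {AP S : Type} (K : Kripke AP S) (π : ℕ → S) : Trace AP :=
  fun i => K.lab (π i)

/-- `L_K(Π)`: the team of traces induced by a set of paths of `K`. -/
def Kripke.teamOf {AP S : Type} (K : Kripke AP S) (Ps : Set (ℕ → S)) : Team AP :=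
  K.traceOf '' Ps

/-- The initial macro-path `ρ0` of `K`: `ρ0(0) = S0` and `ρ0(i+1)` is the set of
`R`-successors of the states in `ρ0(i)`. -/
def Kripke.initMacro {AP S : Type} (K : Kripke AP S) : ℕ → Set S
  | 0 => K.init
  | i + 1 => {s' | ∃ s ∈ K.initMacro i, K.R s s'}

/-- `L(K)`: the team of traces induced by the initial paths of `K`. -/
def Kripke.teamOfInit {AP S : Type} (K : Kripke AP S) : Team AP :=
  K.teamOf {π | K.IsPath π ∧ π 0 ∈ K.init}

section Aux
variable {AP S : Type}

lemma Team.shift_mono {L L' : Team AP} (h : L' ⊆ L) (i : ℕ) : L'.shift i ⊆ L.shift i :=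
  Set.image_mono h

lemma InqForm.sat_mono (φ : InqForm AP) : ∀ {L L' : Team AP}, L' ⊆ L → φ.sat L → φ.sat L' := by
  induction φ with
  | bot =>
    intro L L' h hs
    simp only [InqForm.sat] at *
    subst hs; exact Set.subset_empty_iff.mp h
  | atom p => intro L L' h hs w hw; exact hs w (h hw)
  | or φ ψ ihφ ihψ => intro L L' h hs; exact hs.imp (ihφ h) (ihψ h)
  | and φ ψ ihφ ihψ => intro L L' h hs; exact ⟨ihφ h hs.1, ihψ h hs.2⟩
  | imp φ ψ ihφ ihψ => intro L L' h hs L'' h'' hφ; exact hs L'' (h''.trans h) hφ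
  | next φ ih => intro L L' h hs; exact ih (Team.shift_mono h 1) hs
  | untl φ ψ ihφ ihψ =>
    intro L L' h hs
    obtain ⟨i, h1, h2⟩ := hs
    exact ⟨i, ihψ (Team.shift_mono h i) h1, fun k hk => ihφ (Team.shift_mono h k) (h2 k hk)⟩
  | rel φ ψ ihφ ihψ =>
    intro L L' h hs i
    exact (hs i).imp (ihψ (Team.shift_mono h i)) (fun ⟨k, hk, hφ⟩ => ⟨k, hk, ihφ (Team.shift_mono h k) hφ⟩)

variable (K : Kripke AP S)

lemma Kripke.pathsIn_mono {ρ ρ' : ℕ → Set S} (h : ∀ i, ρ' i ⊆ ρ i) :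
    K.PathsIn ρ' ⊆ K.PathsIn ρ := fun π hπ => ⟨hπ.1, fun i => h i (hπ.2 i)⟩

lemma mshift_mono {ρ ρ' : ℕ → Set S} (h : ∀ i, ρ' i ⊆ ρ i) (i j : ℕ) :
    mshift ρ' i j ⊆ mshift ρ i j := h (i + j)

lemma Kripke.msat_mono (φ : InqForm AP) : ∀ {ρ ρ' : ℕ → Set S}, (∀ i, ρ' i ⊆ ρ i) →
    K.msat φ ρ → K.msat φ ρ' := by
  induction φ with
  | bot =>
    intro ρ ρ' h hs
    simp only [Kripke.msat] at *
    exact Set.subset_empty_iff.mp (hs ▸ K.pathsIn_mono h)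
  | atom p => intro ρ ρ' h hs s hs'; exact hs s (h 0 hs')
  | or φ ψ ihφ ihψ => intro ρ ρ' h hs; exact hs.imp (ihφ h) (ihψ h)
  | and φ ψ ihφ ihψ => intro ρ ρ' h hs; exact ⟨ihφ h hs.1, ihψ h hs.2⟩
  | imp φ ψ ihφ ihψ =>
    intro ρ ρ' h hs ρ'' hm h'' hφ
    exact hs ρ'' hm (fun i => (h'' i).trans (h i)) hφ
  | next φ ih => intro ρ ρ' h hs; exact ih (mshift_mono h 1) hs
  | untl φ ψ ihφ ihψ =>
    intro ρ ρ' h hs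
    obtain ⟨i, h1, h2⟩ := hs
    exact ⟨i, ihψ (mshift_mono h i) h1, fun k hk => ihφ (mshift_mono h k) (h2 k hk)⟩
  | rel φ ψ ihφ ihψ =>
    intro ρ ρ' h hs i
    exact (hs i).imp (ihψ (mshift_mono h i)) (fun ⟨k, hk, hφ⟩ => ⟨k, hk, ihφ (mshift_mono h k) hφ⟩)

lemma Kripke.isMacroPath_mshift {ρ : ℕ → Set S} (h : K.IsMacroPath ρ) (i : ℕ) :
    K.IsMacroPath (mshift ρ i) := fun j => h (i + j)

/-- Forward chain construction. -/
noncomputable def Kripke.fwdChain {ρ : ℕ → Set S} (h : K.IsMacroPath ρ) (s : S) (hs : s ∈ ρ 0) :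
    (j : ℕ) → {t : S // t ∈ ρ j}
  | 0 => ⟨s, hs⟩
  | j + 1 =>
    ⟨((h j).1 _ (Kripke.fwdChain h s hs j).2).choose,
     ((h j).1 _ (Kripke.fwdChain h s hs j).2).choose_spec.1⟩

lemma Kripke.fwdChain_step {ρ : ℕ → Set S} (h : K.IsMacroPath ρ) (s : S) (hs : s ∈ ρ 0) (j : ℕ) :
    K.R (K.fwdChain h s hs j).1 (K.fwdChain h s hs (j + 1)).1 := by
  conv_rhs => rw [Kripke.fwdChain]
  exact ((h j).1 _ (K.fwdChain h s hs j).2).choose_spec.2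

lemma Kripke.exists_path_from {ρ : ℕ → Set S} (h : K.IsMacroPath ρ) {s : S} (hs : s ∈ ρ 0) :
    ∃ π : ℕ → S, K.IsPath π ∧ (∀ j, π j ∈ ρ j) ∧ π 0 = s :=
  ⟨fun j => (K.fwdChain h s hs j).1, fun j => K.fwdChain_step h s hs j,
   fun j => (K.fwdChain h s hs j).2, by show (K.fwdChain h s hs 0).1 = s; rw [Kripke.fwdChain]⟩

lemma Kripke.exists_bwd {ρ : ℕ → Set S} (h : K.IsMacroPath ρ) :
    ∀ (i : ℕ) (s : S), s ∈ ρ i →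
      ∃ g : ℕ → S, g i = s ∧ (∀ j ≤ i, g j ∈ ρ j) ∧ ∀ j < i, K.R (g j) (g (j + 1)) := by
  intro i
  induction i with
  | zero => intro s hs; exact ⟨fun _ => s, rfl, fun j hj => by simpa [Nat.le_zero.mp hj] using hs,
      fun j hj => absurd hj (Nat.not_lt_zero j)⟩
  | succ i ih =>
    intro s hs
    obtain ⟨s₀, hs₀, hR⟩ := (h i).2 s hs
    obtain ⟨g, hgi, hgm, hge⟩ := ih s₀ hs₀
    refine ⟨fun j => if j = i + 1 then s else g j, by simp, ?_, ?_⟩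
    · intro j hj
      by_cases hj' : j = i + 1
      · simpa [hj'] using hs
      · simpa [hj'] using hgm j (by omega)
    · intro j hj
      by_cases hj' : j = i
      · subst hj'; simpa [hgi, Nat.ne_of_lt (Nat.lt_succ_self j)] using hR
      · have h1 : j ≠ i + 1 := by omega
        have h2 : j + 1 ≠ i + 1 := by omega
        simpa [h1, h2, hj'] using hge j (by omega)

lemma Kripke.splice {ρ : ℕ → Set S} {i : ℕ} {g π' : ℕ → S}
    (hgm : ∀ j ≤ i, g j ∈ ρ j) (hge : ∀ j < i, K.R (g j) (g (j + 1)))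
    (hπ' : K.IsPath π') (hπ'm : ∀ k, π' k ∈ ρ (i + k)) (h0 : π' 0 = g i) :
    ∃ π : ℕ → S, K.IsPath π ∧ (∀ j, π j ∈ ρ j) ∧ ∀ k, π (i + k) = π' k := by
  refine ⟨fun j => if j < i then g j else π' (j - i), ?_, ?_, ?_⟩
  · intro j
    rcases lt_trichotomy (j + 1) i with h1 | h1 | h1
    · have h2 : j < i := by omega
      simp only [if_pos h1, if_pos h2]
      exact hge j h2
    · have h2 : j < i := by omega
      simp only [if_pos h2, if_neg (show ¬ j + 1 < i by omega)]
      have he : j + 1 - i = 0 := by omega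
      rw [he, h0, ← h1]
      exact hge j h2
    · have h2 : ¬ j < i := by omega
      simp only [if_neg h2, if_neg (show ¬ j + 1 < i by omega)]
      rw [show j + 1 - i = (j - i) + 1 by omega]
      exact hπ' (j - i)
  · intro j
    by_cases h2 : j < i
    · simp only [if_pos h2]; exact hgm j (by omega)
    · simp only [if_neg h2]
      have hm := hπ'm (j - i)
      rwa [show i + (j - i) = j by omega] at hm
  · intro k
    simp only [if_neg (show ¬ i + k < i by omega)]
    congr 1
    omega

lemma Kripke.exists_path_mem {ρ : ℕ → Set S} (h : K.IsMacroPath ρ) {i : ℕ} {s : S}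
    (hs : s ∈ ρ i) :
    ∃ π : ℕ → S, K.IsPath π ∧ (∀ j, π j ∈ ρ j) ∧ π i = s := by
  obtain ⟨g, hgi, hgm, hge⟩ := K.exists_bwd h i s hs
  obtain ⟨π', hπ', hπ'm, h0⟩ := K.exists_path_from (K.isMacroPath_mshift h i) (s := s) hs
  obtain ⟨π, h1, h2, h3⟩ := K.splice hgm hge hπ' hπ'm (by rw [h0, hgi])
  exact ⟨π, h1, h2, by have := h3 0; simpa [h0] using this⟩

end Aux

section Aux2
variable {AP S : Type} (K : Kripke AP S)

lemma Kripke.teamOf_pathsIn_shift {ρ : ℕ → Set S} (h : K.IsMacroPath ρ) (i : ℕ) :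
    (K.teamOf (K.PathsIn ρ)).shift i = K.teamOf (K.PathsIn (mshift ρ i)) := by
  ext w
  constructor
  · rintro ⟨w', ⟨π, hπ, rfl⟩, rfl⟩
    exact ⟨fun k => π (i + k), ⟨fun k => hπ.1 (i + k), fun k => hπ.2 (i + k)⟩, rfl⟩
  · rintro ⟨π', hπ', rfl⟩
    obtain ⟨g, hgi, hgm, hge⟩ := K.exists_bwd h i (π' 0) (hπ'.2 0)
    obtain ⟨π, h1, h2, h3⟩ := K.splice hgm hge hπ'.1 hπ'.2 hgi.symm
    refine ⟨K.traceOf π, ⟨π, ⟨h1, h2⟩, rfl⟩, ?_⟩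
    funext k
    show K.lab (π (i + k)) = K.lab (π' k)
    rw [h3 k]

lemma Kripke.pathsIn_empty : K.PathsIn (fun _ => (∅ : Set S)) = ∅ :=
  Set.eq_empty_iff_forall_notMem.mpr fun _ hπ => hπ.2 0

lemma Kripke.isMacroPath_empty : K.IsMacroPath (fun _ => (∅ : Set S)) :=
  fun _ => ⟨fun s hs => absurd hs (Set.notMem_empty s),
    fun s hs => absurd hs (Set.notMem_empty s)⟩

lemma Team.shift_empty (i : ℕ) : (∅ : Team AP).shift i = ∅ := Set.image_empty _

lemma Team.shift_singleton (w : Trace AP) (i : ℕ) :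
    ({w} : Team AP).shift i = {w.shift i} := Set.image_singleton

lemma Kripke.msat_empty_iff :
    ∀ ξ : InqForm AP, K.msat ξ (fun _ => (∅ : Set S)) ↔ ξ.sat (∅ : Team AP) := by
  intro ξ
  induction ξ with
  | bot => simp only [Kripke.msat, InqForm.sat, K.pathsIn_empty]
  | atom p =>
    simp only [Kripke.msat, InqForm.sat]
    constructor
    · intro _ w hw; exact absurd hw (Set.notMem_empty w)
    · intro _ s hs; exact absurd hs (Set.notMem_empty s)
  | or φ ψ ihφ ihψ => simp only [Kripke.msat, InqForm.sat]; rw [ihφ, ihψ]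
  | and φ ψ ihφ ihψ => simp only [Kripke.msat, InqForm.sat]; rw [ihφ, ihψ]
  | imp φ ψ ihφ ihψ =>
    simp only [Kripke.msat, InqForm.sat]
    constructor
    · intro hm L' hL' hφ
      have hL : L' = ∅ := Set.subset_empty_iff.mp hL'
      subst hL
      exact ihψ.mp (hm _ K.isMacroPath_empty (fun _ => subset_rfl) (ihφ.mpr hφ))
    · intro hs ρ' hρ' hsub hφ
      have hemp : ρ' = fun _ => ∅ := funext fun i => Set.subset_empty_iff.mp (hsub i)
      subst hemp
      exact ihψ.mpr (hs ∅ subset_rfl (ihφ.mp hφ))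
  | next φ ih =>
    simp only [Kripke.msat, InqForm.sat, Team.shift_empty]
    exact ih
  | untl φ ψ ihφ ihψ =>
    simp only [Kripke.msat, InqForm.sat, Team.shift_empty]
    constructor
    · rintro ⟨i, h1, h2⟩; exact ⟨i, ihψ.mp h1, fun k hk => ihφ.mp (h2 k hk)⟩
    · rintro ⟨i, h1, h2⟩; exact ⟨i, ihψ.mpr h1, fun k hk => ihφ.mpr (h2 k hk)⟩
  | rel φ ψ ihφ ihψ =>
    simp only [Kripke.msat, InqForm.sat, Team.shift_empty]
    constructor
    · intro hs i
      exact (hs i).imp ihψ.mp (fun ⟨k, hk, h⟩ => ⟨k, hk, ihφ.mp h⟩)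
    · intro hs i
      exact (hs i).imp ihψ.mpr (fun ⟨k, hk, h⟩ => ⟨k, hk, ihφ.mpr h⟩)

lemma Kripke.isMacroPath_singleton {π : ℕ → S} (hπ : K.IsPath π) :
    K.IsMacroPath (fun i => {π i}) := by
  intro i
  constructor
  · intro s hs
    rw [Set.mem_singleton_iff] at hs; subst hs
    exact ⟨π (i + 1), rfl, hπ i⟩
  · intro s' hs'
    rw [Set.mem_singleton_iff] at hs'; subst hs'
    exact ⟨π i, rfl, hπ i⟩

lemma Kripke.pathsIn_singleton {π : ℕ → S} (hπ : K.IsPath π) :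
    K.PathsIn (fun i => {π i}) = {π} := by
  ext π'
  simp only [Kripke.PathsIn, Set.mem_setOf_eq, Set.mem_singleton_iff]
  constructor
  · rintro ⟨-, h2⟩; funext i; simpa using h2 i
  · rintro rfl; exact ⟨hπ, fun _ => rfl⟩

lemma sub_singleton_dichotomy {π : ℕ → S} (hπ : K.IsPath π) {ρ' : ℕ → Set S}
    (hm : K.IsMacroPath ρ') (hsub : ∀ i, ρ' i ⊆ {π i}) :
    ρ' = (fun _ => (∅ : Set S)) ∨ ρ' = fun i => {π i} := by
  by_cases h0 : π 0 ∈ ρ' 0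
  · right
    have hall : ∀ i, π i ∈ ρ' i := by
      intro i
      induction i with
      | zero => exact h0
      | succ i ih =>
        obtain ⟨s', hs', hR⟩ := (hm i).1 (π i) ih
        have he : s' = π (i + 1) := Set.mem_singleton_iff.mp (hsub (i + 1) hs')
        rwa [he] at hs'
    funext i
    exact le_antisymm (hsub i) (Set.singleton_subset_iff.mpr (hall i))
  · left
    have hall : ∀ i, ρ' i = ∅ := by
      intro i
      induction i with
      | zero =>
        rw [Set.eq_empty_iff_forall_notMem]
        intro s hs
        have he := Set.mem_singleton_iff.mp (hsub 0 hs)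
        exact h0 (he ▸ hs)
      | succ i ih =>
        rw [Set.eq_empty_iff_forall_notMem]
        intro s hs
        obtain ⟨s₀, hs₀, -⟩ := (hm i).2 s hs
        rw [ih] at hs₀
        exact hs₀
    exact funext hall

lemma Kripke.msat_singleton_iff (ξ : InqForm AP) :
    ∀ (π : ℕ → S), K.IsPath π → (K.msat ξ (fun i => {π i}) ↔ ξ.sat {K.traceOf π}) := by
  induction ξ with
  | bot =>
    intro π hπ
    simp only [Kripke.msat, InqForm.sat, K.pathsIn_singleton hπ]
    exact iff_of_false (Set.singleton_ne_empty π) (Set.singleton_ne_empty _)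
  | atom p =>
    intro π hπ
    simp only [Kripke.msat, InqForm.sat, Set.mem_singleton_iff]
    constructor
    · rintro h w rfl; exact h (π 0) rfl
    · rintro h s rfl; exact h _ rfl
  | or φ ψ ihφ ihψ =>
    intro π hπ
    simp only [Kripke.msat, InqForm.sat]
    rw [ihφ π hπ, ihψ π hπ]
  | and φ ψ ihφ ihψ =>
    intro π hπ
    simp only [Kripke.msat, InqForm.sat]
    rw [ihφ π hπ, ihψ π hπ]
  | imp φ ψ ihφ ihψ =>
    intro π hπ
    simp only [Kripke.msat, InqForm.sat]
    constructor
    · intro hm L' hL' hφ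
      rcases Set.subset_singleton_iff_eq.mp hL' with rfl | rfl
      · exact (K.msat_empty_iff ψ).mp
          (hm _ K.isMacroPath_empty (fun _ => Set.empty_subset _) ((K.msat_empty_iff φ).mpr hφ))
      · exact (ihψ π hπ).mp
          (hm _ (K.isMacroPath_singleton hπ) (fun _ => subset_rfl) ((ihφ π hπ).mpr hφ))
    · intro hs ρ' hρ' hsub hφ
      rcases sub_singleton_dichotomy K hπ hρ' hsub with rfl | rfl
      · exact (K.msat_empty_iff ψ).mpr (hs ∅ (Set.empty_subset _) ((K.msat_empty_iff φ).mp hφ))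
      · exact (ihψ π hπ).mpr (hs _ subset_rfl ((ihφ π hπ).mp hφ))
  | next φ ih =>
    intro π hπ
    simp only [Kripke.msat, InqForm.sat, Team.shift_singleton]
    exact ih (fun k => π (1 + k)) (fun k => hπ (1 + k))
  | untl φ ψ ihφ ihψ =>
    intro π hπ
    simp only [Kripke.msat, InqForm.sat, Team.shift_singleton]
    constructor
    · rintro ⟨i, h1, h2⟩
      exact ⟨i, (ihψ (fun k => π (i + k)) (fun k => hπ (i + k))).mp h1,
        fun k hk => (ihφ (fun j => π (k + j)) (fun j => hπ (k + j))).mp (h2 k hk)⟩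
    · rintro ⟨i, h1, h2⟩
      exact ⟨i, (ihψ (fun k => π (i + k)) (fun k => hπ (i + k))).mpr h1,
        fun k hk => (ihφ (fun j => π (k + j)) (fun j => hπ (k + j))).mpr (h2 k hk)⟩
  | rel φ ψ ihφ ihψ =>
    intro π hπ
    simp only [Kripke.msat, InqForm.sat, Team.shift_singleton]
    constructor
    · intro hs i
      exact (hs i).imp (ihψ (fun k => π (i + k)) (fun k => hπ (i + k))).mp
        (fun ⟨k, hk, h⟩ => ⟨k, hk, (ihφ (fun j => π (k + j)) (fun j => hπ (k + j))).mp h⟩)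
    · intro hs i
      exact (hs i).imp (ihψ (fun k => π (i + k)) (fun k => hπ (i + k))).mpr
        (fun ⟨k, hk, h⟩ => ⟨k, hk, (ihφ (fun j => π (k + j)) (fun j => hπ (k + j))).mpr h⟩)

end Aux2

section Aux3
variable {AP S : Type} (K : Kripke AP S)

/-- The macro-path induced by a set of paths. -/
def pathMacro (Ps : Set (ℕ → S)) : ℕ → Set S := fun i => {s | ∃ π ∈ Ps, π i = s}

lemma Kripke.isMacroPath_pathMacro {Ps : Set (ℕ → S)} (h : ∀ π ∈ Ps, K.IsPath π) :
    K.IsMacroPath (pathMacro Ps) := by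
  intro i
  constructor
  · rintro s ⟨π, hπ, rfl⟩
    exact ⟨π (i + 1), ⟨π, hπ, rfl⟩, h π hπ i⟩
  · rintro s' ⟨π, hπ, rfl⟩
    exact ⟨π i, ⟨π, hπ, rfl⟩, h π hπ i⟩

lemma pathMacro_shift (Ps : Set (ℕ → S)) (i : ℕ) :
    mshift (pathMacro Ps) i = pathMacro ((fun π k => π (i + k)) '' Ps) := by
  funext j
  ext s
  simp only [mshift, pathMacro, Set.mem_setOf_eq, Set.mem_image]
  constructor
  · rintro ⟨π, hπ, rfl⟩; exact ⟨_, ⟨π, hπ, rfl⟩, rfl⟩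
  · rintro ⟨π', ⟨π, hπ, rfl⟩, rfl⟩; exact ⟨π, hπ, rfl⟩

lemma Kripke.teamOf_shift (Ps : Set (ℕ → S)) (i : ℕ) :
    (K.teamOf Ps).shift i = K.teamOf ((fun π k => π (i + k)) '' Ps) := by
  unfold Kripke.teamOf Team.shift
  rw [Set.image_image, Set.image_image]
  rfl

lemma InqForm.pos_imp {AP' : Type} {φ ψ : InqForm AP'} (h : (InqForm.imp φ ψ).isPositive) :
    (∃ p, φ = .atom p) ∧ ψ = .bot := by
  cases φ <;> cases ψ <;> first | exact ⟨⟨_, rfl⟩, rfl⟩ | exact h.elim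

lemma Kripke.pos_sat_to_msat : ∀ (ψ : InqForm AP), ψ.isPositive →
    ∀ (Ps : Set (ℕ → S)), (∀ π ∈ Ps, K.IsPath π) → ψ.sat (K.teamOf Ps) →
      K.msat ψ (pathMacro Ps) := by
  intro ψ
  induction ψ with
  | bot =>
    intro _ Ps hPs hs
    simp only [InqForm.sat] at hs
    have hemp : Ps = ∅ := Set.image_eq_empty.mp hs
    subst hemp
    simp only [Kripke.msat]
    rw [Set.eq_empty_iff_forall_notMem]
    rintro π' ⟨-, h2⟩
    obtain ⟨π, hπ, -⟩ := h2 0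
    exact hπ.elim
  | atom p =>
    intro _ Ps hPs hs s hs0
    obtain ⟨π, hπ, rfl⟩ := hs0
    exact hs (K.traceOf π) ⟨π, hπ, rfl⟩
  | or φ ψ ihφ ihψ =>
    intro hψ Ps hPs hs
    exact hs.imp (ihφ hψ.1 Ps hPs) (ihψ hψ.2 Ps hPs)
  | and φ ψ ihφ ihψ =>
    intro hψ Ps hPs hs
    exact ⟨ihφ hψ.1 Ps hPs hs.1, ihψ hψ.2 Ps hPs hs.2⟩
  | imp φ ψ ihφ ihψ =>
    intro hpos Ps hPs hs
    obtain ⟨⟨p, rfl⟩, rfl⟩ := InqForm.pos_imp hpos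
    intro ρ' hρ' hsub hatom
    simp only [Kripke.msat]
    rw [Set.eq_empty_iff_forall_notMem]
    rintro π' ⟨-, hmem⟩
    obtain ⟨π, hπ, heq⟩ := hsub 0 (hmem 0)
    have hpmem : p ∈ K.lab (π' 0) := hatom (π' 0) (hmem 0)
    have hsp : InqForm.sat (.atom p) {K.traceOf π} := by
      intro w hw
      rw [Set.mem_singleton_iff] at hw; subst hw
      show p ∈ K.lab (π 0)
      rw [heq]; exact hpmem
    have := hs {K.traceOf π} (Set.singleton_subset_iff.mpr ⟨π, hπ, rfl⟩) hsp
    exact Set.singleton_ne_empty _ this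
  | next φ ih =>
    intro hψ Ps hPs hs
    simp only [InqForm.sat] at hs
    simp only [Kripke.msat]
    rw [pathMacro_shift]
    apply ih hψ
    · rintro π' ⟨π, hπ, rfl⟩ k
      exact hPs π hπ (1 + k)
    · rw [← K.teamOf_shift]; exact hs
  | untl φ ψ ihφ ihψ =>
    intro hψ Ps hPs hs
    simp only [InqForm.sat] at hs
    obtain ⟨i, h1, h2⟩ := hs
    refine ⟨i, ?_, fun k hk => ?_⟩
    · rw [pathMacro_shift]
      apply ihψ hψ.2
      · rintro π' ⟨π, hπ, rfl⟩ j
        exact hPs π hπ (i + j)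
      · rw [← K.teamOf_shift]; exact h1
    · rw [pathMacro_shift]
      apply ihφ hψ.1
      · rintro π' ⟨π, hπ, rfl⟩ j
        exact hPs π hπ (k + j)
      · rw [← K.teamOf_shift]; exact h2 k hk
  | rel φ ψ ihφ ihψ =>
    intro hψ Ps hPs hs
    simp only [InqForm.sat] at hs
    intro i
    refine (hs i).imp (fun h1 => ?_) (fun ⟨k, hk, h2⟩ => ⟨k, hk, ?_⟩)
    · rw [pathMacro_shift]
      apply ihψ hψ.2
      · rintro π' ⟨π, hπ, rfl⟩ j
        exact hPs π hπ (i + j)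
      · rw [← K.teamOf_shift]; exact h1
    · rw [pathMacro_shift]
      apply ihφ hψ.1
      · rintro π' ⟨π, hπ, rfl⟩ j
        exact hPs π hπ (k + j)
      · rw [← K.teamOf_shift]; exact h2

lemma Kripke.pos_msat_to_sat : ∀ (ψ : InqForm AP), ψ.isPositive →
    ∀ (ρ : ℕ → Set S), K.IsMacroPath ρ → K.msat ψ ρ → ψ.sat (K.teamOf (K.PathsIn ρ)) := by
  intro ψ
  induction ψ with
  | bot =>
    intro _ ρ hρ hm
    simp only [Kripke.msat] at hm
    simp only [InqForm.sat, Kripke.teamOf, hm, Set.image_empty]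
  | atom p =>
    intro _ ρ hρ hm w hw
    obtain ⟨π, hπ, rfl⟩ := hw
    exact hm (π 0) (hπ.2 0)
  | or φ ψ ihφ ihψ =>
    intro hψ ρ hρ hm
    exact hm.imp (ihφ hψ.1 ρ hρ) (ihψ hψ.2 ρ hρ)
  | and φ ψ ihφ ihψ =>
    intro hψ ρ hρ hm
    exact ⟨ihφ hψ.1 ρ hρ hm.1, ihψ hψ.2 ρ hρ hm.2⟩
  | imp φ ψ ihφ ihψ =>
    intro hpos ρ hρ hm
    obtain ⟨⟨p, rfl⟩, rfl⟩ := InqForm.pos_imp hpos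
    intro L' hL' hp
    rw [InqForm.sat, Set.eq_empty_iff_forall_notMem]
    intro w hw
    obtain ⟨π, hπ, heq⟩ := hL' hw
    have hsing := K.isMacroPath_singleton hπ.1
    have hmp : K.msat (.atom p) (fun i => {π i}) := by
      intro s hs
      rw [Set.mem_singleton_iff] at hs; subst hs
      have := hp w hw
      rw [← heq] at this
      exact this
    have := hm _ hsing (fun i => Set.singleton_subset_iff.mpr (hπ.2 i)) hmp
    simp only [Kripke.msat, K.pathsIn_singleton hπ.1] at this
    exact Set.singleton_ne_empty π this
  | next φ ih =>
    intro hψ ρ hρ hm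
    simp only [Kripke.msat] at hm
    simp only [InqForm.sat]
    rw [K.teamOf_pathsIn_shift hρ]
    exact ih hψ _ (K.isMacroPath_mshift hρ 1) hm
  | untl φ ψ ihφ ihψ =>
    intro hψ ρ hρ hm
    obtain ⟨i, h1, h2⟩ := hm
    refine ⟨i, ?_, fun k hk => ?_⟩
    · rw [K.teamOf_pathsIn_shift hρ]
      exact ihψ hψ.2 _ (K.isMacroPath_mshift hρ i) h1
    · rw [K.teamOf_pathsIn_shift hρ]
      exact ihφ hψ.1 _ (K.isMacroPath_mshift hρ k) (h2 k hk)
  | rel φ ψ ihφ ihψ =>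
    intro hψ ρ hρ hm i
    refine (hm i).imp (fun h1 => ?_) (fun ⟨k, hk, h2⟩ => ⟨k, hk, ?_⟩)
    · rw [K.teamOf_pathsIn_shift hρ]
      exact ihψ hψ.2 _ (K.isMacroPath_mshift hρ i) h1
    · rw [K.teamOf_pathsIn_shift hρ]
      exact ihφ hψ.1 _ (K.isMacroPath_mshift hρ k) h2

end Aux3

section Aux4
variable {AP S : Type} (K : Kripke AP S)

lemma Kripke.main_lemma : ∀ (φ : InqForm AP), φ.isLeftPositive →
    ∀ (ρ : ℕ → Set S), K.IsMacroPath ρ →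
      (K.msat φ ρ ↔ φ.sat (K.teamOf (K.PathsIn ρ))) := by
  intro φ
  induction φ with
  | bot =>
    intro _ ρ hρ
    simp only [Kripke.msat, InqForm.sat, Kripke.teamOf]
    exact ⟨fun h => by rw [h, Set.image_empty], fun h => Set.image_eq_empty.mp h⟩
  | atom p =>
    intro _ ρ hρ
    constructor
    · rintro hm w ⟨π, hπ, rfl⟩
      exact hm (π 0) (hπ.2 0)
    · intro hs s hs0
      obtain ⟨π, h1, h2, h3⟩ := K.exists_path_mem hρ (i := 0) hs0
      have := hs (K.traceOf π) ⟨π, ⟨h1, h2⟩, rfl⟩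
      rw [← h3]
      exact this
  | or φ ψ ihφ ihψ =>
    intro hφ ρ hρ
    simp only [Kripke.msat, InqForm.sat]
    rw [ihφ hφ.1 ρ hρ, ihψ hφ.2 ρ hρ]
  | and φ ψ ihφ ihψ =>
    intro hφ ρ hρ
    simp only [Kripke.msat, InqForm.sat]
    rw [ihφ hφ.1 ρ hρ, ihψ hφ.2 ρ hρ]
  | imp φ ψ ihφ ihψ =>
    intro hφ ρ hρ
    rcases hφ with hbot | ⟨hpos, hlp⟩
    · subst hbot
      constructor
      · intro hm L' hL' hsφ
        simp only [InqForm.sat]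
        rw [Set.eq_empty_iff_forall_notMem]
        intro w hw
        obtain ⟨π, hπ, rfl⟩ := hL' hw
        have h1 : InqForm.sat φ {K.traceOf π} :=
          InqForm.sat_mono φ (Set.singleton_subset_iff.mpr hw) hsφ
        have h2 : K.msat φ (fun i => {π i}) := (K.msat_singleton_iff φ π hπ.1).mpr h1
        have := hm _ (K.isMacroPath_singleton hπ.1)
          (fun i => Set.singleton_subset_iff.mpr (hπ.2 i)) h2
        simp only [Kripke.msat, K.pathsIn_singleton hπ.1] at this
        exact Set.singleton_ne_empty π this
      · intro hs ρ' hρ' hsub hmφ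
        simp only [Kripke.msat]
        rw [Set.eq_empty_iff_forall_notMem]
        intro π hπ
        have h2 : K.msat φ (fun i => {π i}) :=
          K.msat_mono φ (fun i => Set.singleton_subset_iff.mpr (hπ.2 i)) hmφ
        have h1 := (K.msat_singleton_iff φ π hπ.1).mp h2
        have hsub' : ({K.traceOf π} : Team AP) ⊆ K.teamOf (K.PathsIn ρ) :=
          Set.singleton_subset_iff.mpr ⟨π, K.pathsIn_mono hsub hπ, rfl⟩
        have := hs _ hsub' h1
        exact Set.singleton_ne_empty _ this
    · constructor
      · intro hm L' hL' hsφ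
        set Ps : Set (ℕ → S) := {π ∈ K.PathsIn ρ | K.traceOf π ∈ L'} with hPsdef
        have hPaths : ∀ π ∈ Ps, K.IsPath π := fun π hπ => hπ.1.1
        have hteam : K.teamOf Ps = L' := by
          apply Set.Subset.antisymm
          · rintro w ⟨π, hπ, rfl⟩; exact hπ.2
          · intro w hw
            obtain ⟨π, hπ, rfl⟩ := hL' hw
            exact ⟨π, ⟨hπ, hw⟩, rfl⟩
        have hsubρ : ∀ i, pathMacro Ps i ⊆ ρ i := by
          rintro i s ⟨π, hπ, rfl⟩; exact hπ.1.2 i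
        have hmφ' : K.msat φ (pathMacro Ps) :=
          K.pos_sat_to_msat φ hpos Ps hPaths (hteam ▸ hsφ)
        have hmac := K.isMacroPath_pathMacro hPaths
        have hmψ := hm (pathMacro Ps) hmac hsubρ hmφ'
        have hx := (ihψ hlp (pathMacro Ps) hmac).mp hmψ
        apply InqForm.sat_mono ψ ?_ hx
        intro w hw
        rw [← hteam] at hw
        obtain ⟨π, hπ, rfl⟩ := hw
        exact ⟨π, ⟨hπ.1.1, fun i => ⟨π, hπ, rfl⟩⟩, rfl⟩
      · intro hs ρ' hρ' hsub hmφ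
        have h1 := K.pos_msat_to_sat φ hpos ρ' hρ' hmφ
        have h2 : K.teamOf (K.PathsIn ρ') ⊆ K.teamOf (K.PathsIn ρ) :=
          Set.image_mono (K.pathsIn_mono hsub)
        exact (ihψ hlp ρ' hρ').mpr (hs _ h2 h1)
  | next φ ih =>
    intro hφ ρ hρ
    simp only [Kripke.msat, InqForm.sat]
    rw [K.teamOf_pathsIn_shift hρ]
    exact ih hφ _ (K.isMacroPath_mshift hρ 1)
  | untl φ ψ ihφ ihψ =>
    intro hφ ρ hρ
    simp only [Kripke.msat, InqForm.sat]
    constructor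
    · rintro ⟨i, h1, h2⟩
      refine ⟨i, ?_, fun k hk => ?_⟩
      · rw [K.teamOf_pathsIn_shift hρ]
        exact (ihψ hφ.2 _ (K.isMacroPath_mshift hρ i)).mp h1
      · rw [K.teamOf_pathsIn_shift hρ]
        exact (ihφ hφ.1 _ (K.isMacroPath_mshift hρ k)).mp (h2 k hk)
    · rintro ⟨i, h1, h2⟩
      rw [K.teamOf_pathsIn_shift hρ] at h1
      refine ⟨i, (ihψ hφ.2 _ (K.isMacroPath_mshift hρ i)).mpr h1, fun k hk => ?_⟩
      have := h2 k hk
      rw [K.teamOf_pathsIn_shift hρ] at this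
      exact (ihφ hφ.1 _ (K.isMacroPath_mshift hρ k)).mpr this
  | rel φ ψ ihφ ihψ =>
    intro hφ ρ hρ
    simp only [Kripke.msat, InqForm.sat]
    constructor
    · intro hm i
      refine (hm i).imp (fun h1 => ?_) (fun ⟨k, hk, h2⟩ => ⟨k, hk, ?_⟩)
      · rw [K.teamOf_pathsIn_shift hρ]
        exact (ihψ hφ.2 _ (K.isMacroPath_mshift hρ i)).mp h1
      · rw [K.teamOf_pathsIn_shift hρ]
        exact (ihφ hφ.1 _ (K.isMacroPath_mshift hρ k)).mp h2
    · intro hs i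
      refine (hs i).imp (fun h1 => ?_) (fun ⟨k, hk, h2⟩ => ⟨k, hk, ?_⟩)
      · rw [K.teamOf_pathsIn_shift hρ] at h1
        exact (ihψ hφ.2 _ (K.isMacroPath_mshift hρ i)).mpr h1
      · rw [K.teamOf_pathsIn_shift hρ] at h2
        exact (ihφ hφ.1 _ (K.isMacroPath_mshift hρ k)).mpr h2

lemma Kripke.isMacroPath_initMacro : K.IsMacroPath K.initMacro := by
  intro i
  constructor
  · intro s hs
    obtain ⟨s', hR⟩ := K.leftTotal s
    exact ⟨s', ⟨s, hs, hR⟩, hR⟩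
  · rintro s' ⟨s, hs, hR⟩
    exact ⟨s, hs, hR⟩

lemma Kripke.pathsIn_initMacro :
    K.PathsIn K.initMacro = {π | K.IsPath π ∧ π 0 ∈ K.init} := by
  ext π
  simp only [Kripke.PathsIn, Set.mem_setOf_eq]
  constructor
  · rintro ⟨h1, h2⟩
    exact ⟨h1, h2 0⟩
  · rintro ⟨h1, h2⟩
    refine ⟨h1, fun i => ?_⟩
    induction i with
    | zero => exact h2
    | succ i ih => exact ⟨π i, ih, h1 i⟩

end Aux4


/-- for left-positive InqLTL formulas, satisfaction of the initial
macro-path under the macro-path semantics coincides with team satisfaction by `L(K)`. -/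
theorem leftPositive_initMacro_iff_teamOfInit {AP S : Type} [Fintype AP]
    (K : Kripke AP S) (φ : InqForm AP) (hφ : φ.isLeftPositive) :
    K.msat φ K.initMacro ↔ φ.sat K.teamOfInit := by
  have := K.main_lemma φ hφ K.initMacro K.isMacroPath_initMacro
  rwa [K.pathsIn_initMacro] at this
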